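/- For twistor functions w^p_{m,a} = (μ⁰)^{p+m-1}(μ¹)^{p-m-1}/(2 λ₀^{p-a-2} λ₁^{p+a-2}), the Λ-deformed Poisson bracket {f,g}_Λ = ∂f/∂μ⁰ ∂g/∂μ¹ − ∂f/∂μ¹ ∂g/∂μ⁰ + Λ(∂f/∂λ₀ ∂g/∂λ₁ − ∂f/∂λ₁ ∂g/∂λ₀) evaluates to {w^p_{m,a}, w^q_{n,b}}_Λ = (m(q-1)-n(p-1)) w^{p+q-2}_{m+n,a+b} − Λ(a(q-2)-b(p-2)) w^{p+q-1}_{m+n,a+b}. -/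
import Mathlib

/-- The Λ-deformed Poisson bracket
`{f,g}_Λ = ∂f/∂μ⁰ ∂g/∂μ¹ − ∂f/∂μ¹ ∂g/∂μ⁰ + Λ(∂f/∂λ₀ ∂g/∂λ₁ − ∂f/∂λ₁ ∂g/∂λ₀)`
on functions of the four twistor coordinates `(μ⁰, μ¹, λ₀, λ₁)`. -/
noncomputable def pb (Λ : ℂ) (f g : ℂ → ℂ → ℂ → ℂ → ℂ) : ℂ → ℂ → ℂ → ℂ → ℂ :=
  fun x y s t =>
    deriv (fun u => f u y s t) x * deriv (fun u => g x u s t) y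
    - deriv (fun u => f x u s t) y * deriv (fun u => g u y s t) x
    + Λ * (deriv (fun u => f x y u t) s * deriv (fun u => g x y s u) t
         - deriv (fun u => f x y s u) t * deriv (fun u => g x y u t) s)

/-- The Laurent monomial `c · (μ⁰)^i (μ¹)^j λ₀^k λ₁^l`. -/
noncomputable def mon (c : ℂ) (i j k l : ℤ) : ℂ → ℂ → ℂ → ℂ → ℂ :=
  fun x y s t => c * x ^ i * y ^ j * s ^ k * t ^ l

lemma d1 (c A B E : ℂ) (i : ℤ) (x : ℂ) (hx : x ≠ 0) :
    deriv (fun u : ℂ => c * u ^ i * A * B * E) x = (i : ℂ) * c * x ^ (i - 1) * A * B * E := by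
  have h := ((((hasDerivAt_zpow i x (Or.inl hx)).const_mul c).mul_const A).mul_const B).mul_const E
  rw [h.deriv]; ring

lemma d2 (c A B E : ℂ) (i : ℤ) (x : ℂ) (hx : x ≠ 0) :
    deriv (fun u : ℂ => c * A * u ^ i * B * E) x = (i : ℂ) * c * A * x ^ (i - 1) * B * E := by
  have h := (((hasDerivAt_zpow i x (Or.inl hx)).const_mul (c * A)).mul_const B).mul_const E
  rw [h.deriv]; ring

lemma d3 (c A B E : ℂ) (i : ℤ) (x : ℂ) (hx : x ≠ 0) :
    deriv (fun u : ℂ => c * A * B * u ^ i * E) x = (i : ℂ) * c * A * B * x ^ (i - 1) * E := by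
  have h := ((hasDerivAt_zpow i x (Or.inl hx)).const_mul (c * A * B)).mul_const E
  rw [h.deriv]; ring

lemma d4 (c A B E : ℂ) (i : ℤ) (x : ℂ) (hx : x ≠ 0) :
    deriv (fun u : ℂ => c * A * B * E * u ^ i) x = (i : ℂ) * c * A * B * E * x ^ (i - 1) := by
  have h := (hasDerivAt_zpow i x (Or.inl hx)).const_mul (c * A * B * E)
  rw [h.deriv]; ring

/-- For the twistor functions
`w^p_{m,a} = (μ⁰)^{p+m-1} (μ¹)^{p-m-1} / (2 λ₀^{p-a-2} λ₁^{p+a-2})`,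
the Λ-deformed Poisson bracket evaluates to
`{w^p_{m,a}, w^q_{n,b}}_Λ = (m(q-1)-n(p-1)) w^{p+q-2}_{m+n,a+b}
                            − Λ(a(q-2)-b(p-2)) w^{p+q-1}_{m+n,a+b}`. -/
theorem poisson_bracket_of_generators (Λ : ℂ) (p m a q n b : ℚ)
    (k₁ k₂ e₁ e₂ l₁ l₂ g₁ g₂ : ℤ)
    (hk₁ : 0 ≤ k₁) (hk₂ : 0 ≤ k₂) (hl₁ : 0 ≤ l₁) (hl₂ : 0 ≤ l₂)
    (h₁ : (k₁ : ℚ) = p + m - 1) (h₂ : (k₂ : ℚ) = p - m - 1)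
    (h₃ : (e₁ : ℚ) = a + 2 - p) (h₄ : (e₂ : ℚ) = 2 - p - a)
    (h₅ : (l₁ : ℚ) = q + n - 1) (h₆ : (l₂ : ℚ) = q - n - 1)
    (h₇ : (g₁ : ℚ) = b + 2 - q) (h₈ : (g₂ : ℚ) = 2 - q - b)
    (x y s t : ℂ) (hx : x ≠ 0) (hy : y ≠ 0) (hs : s ≠ 0) (ht : t ≠ 0) :
    pb Λ (mon (1/2) k₁ k₂ e₁ e₂) (mon (1/2) l₁ l₂ g₁ g₂) x y s t
      = ((m * (q - 1) - n * (p - 1) : ℚ) : ℂ) *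
          mon (1/2) (k₁ + l₁ - 1) (k₂ + l₂ - 1) (e₁ + g₁) (e₂ + g₂) x y s t
        - Λ * ((a * (q - 2) - b * (p - 2) : ℚ) : ℂ) *
          mon (1/2) (k₁ + l₁) (k₂ + l₂) (e₁ + g₁ - 1) (e₂ + g₂ - 1) x y s t := by
  have H1 : (k₁ : ℂ) = (p : ℂ) + m - 1 := by exact_mod_cast h₁
  have H2 : (k₂ : ℂ) = (p : ℂ) - m - 1 := by exact_mod_cast h₂
  have H3 : (e₁ : ℂ) = (a : ℂ) + 2 - p := by exact_mod_cast h₃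
  have H4 : (e₂ : ℂ) = 2 - (p : ℂ) - a := by exact_mod_cast h₄
  have H5 : (l₁ : ℂ) = (q : ℂ) + n - 1 := by exact_mod_cast h₅
  have H6 : (l₂ : ℂ) = (q : ℂ) - n - 1 := by exact_mod_cast h₆
  have H7 : (g₁ : ℂ) = (b : ℂ) + 2 - q := by exact_mod_cast h₇
  have H8 : (g₂ : ℂ) = 2 - (q : ℂ) - b := by exact_mod_cast h₈
  have HC1 : (k₁ : ℂ) * l₂ - (k₂ : ℂ) * l₁
      = 2 * ((m * (q - 1) - n * (p - 1) : ℚ) : ℂ) := by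
    push_cast
    rw [H1, H2, H5, H6]; ring
  have HC2 : (e₁ : ℂ) * g₂ - (e₂ : ℂ) * g₁
      = -2 * ((a * (q - 2) - b * (p - 2) : ℚ) : ℂ) := by
    push_cast
    rw [H3, H4, H7, H8]; ring
  simp only [pb, mon]
  rw [d1 (1/2) (y ^ k₂) (s ^ e₁) (t ^ e₂) k₁ x hx,
      d2 (1/2) (x ^ k₁) (s ^ e₁) (t ^ e₂) k₂ y hy,
      d3 (1/2) (x ^ k₁) (y ^ k₂) (t ^ e₂) e₁ s hs,
      d4 (1/2) (x ^ k₁) (y ^ k₂) (s ^ e₁) e₂ t ht,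
      d1 (1/2) (y ^ l₂) (s ^ g₁) (t ^ g₂) l₁ x hx,
      d2 (1/2) (x ^ l₁) (s ^ g₁) (t ^ g₂) l₂ y hy,
      d3 (1/2) (x ^ l₁) (y ^ l₂) (t ^ g₂) g₁ s hs,
      d4 (1/2) (x ^ l₁) (y ^ l₂) (s ^ g₁) g₂ t ht]
  simp only [zpow_sub₀ hx, zpow_add₀ hx, zpow_sub₀ hy, zpow_add₀ hy,
    zpow_sub₀ hs, zpow_add₀ hs, zpow_sub₀ ht, zpow_add₀ ht, zpow_one]
  linear_combination
    ((1/4 : ℂ) * (x ^ k₁ * x ^ l₁ / x) * (y ^ k₂ * y ^ l₂ / y)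
      * (s ^ e₁ * s ^ g₁) * (t ^ e₂ * t ^ g₂)) * HC1
    + (Λ / 4 * (x ^ k₁ * x ^ l₁) * (y ^ k₂ * y ^ l₂)
      * (s ^ e₁ * s ^ g₁ / s) * (t ^ e₂ * t ^ g₂ / t)) * HC2
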